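/- Let X be a normal Tychonoff space, let βX be its Stone–Čech compactification (with X identified with its image), and let υX = ⋂{C : C is a cozero-set of βX containing X}. Let 𝓡_X be the ideal in X generated by the subsets of X whose closures are realcompact. Then X is connected modulo 𝓡_X if and only if cl_{βX}(υX \ X) is preconnected (i.e., it cannot be written as the union of two nonempty separated subsets). -/

import Mathlib

open Set Topology

/-- An ideal in a set `X`: a nonempty collection of subsets of `X`, downward closed
and closed under finite unions. -/
def IsSetIdeal {X : Type*} (H : Set (Set X)) : Prop :=
  H.Nonempty ∧ (∀ A B : Set X, A ⊆ B → B ∈ H → A ∈ H) ∧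
    (∀ A B : Set X, A ∈ H → B ∈ H → A ∪ B ∈ H)

/-- A continuous map `f : X → [0,1]` is 2-valued modulo an ideal `H` if `f⁻¹(0) ∉ H`,
`f⁻¹(1) ∉ H`, and `X \ (f⁻¹(0) ∪ f⁻¹(1)) ∈ H`. -/
def TwoValuedMod {X : Type*} [TopologicalSpace X] (H : Set (Set X)) (f : X → ℝ) : Prop :=
  Continuous f ∧ (∀ x, f x ∈ Set.Icc (0 : ℝ) 1) ∧
    f ⁻¹' {0} ∉ H ∧ f ⁻¹' {1} ∉ H ∧ (f ⁻¹' {0} ∪ f ⁻¹' {1})ᶜ ∈ H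

/-- `X` is connected modulo the ideal `H` if there is no continuous `f : X → [0,1]`
that is 2-valued modulo `H`. -/
def ConnectedMod (X : Type*) [TopologicalSpace X] (H : Set (Set X)) : Prop :=
  ¬ ∃ f : X → ℝ, TwoValuedMod H f

/-- The ideal generated by a collection `𝓐` of subsets of `X`: all subsets of finite
unions of members of `𝓐`. -/
def GenIdeal {X : Type*} (𝓐 : Set (Set X)) : Set (Set X) :=
  {S | ∃ 𝓑 : Set (Set X), 𝓑 ⊆ 𝓐 ∧ 𝓑.Finite ∧ S ⊆ ⋃₀ 𝓑}

/-- The Hewitt realcompactification `υX` of `X` inside `βX`: the intersection of all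
cozero-sets of `βX` containing the image of `X`. -/
def upsilonSet (X : Type*) [TopologicalSpace X] : Set (StoneCech X) :=
  ⋂₀ {C : Set (StoneCech X) |
    (∃ g : StoneCech X → ℝ, Continuous g ∧ C = {p | g p ≠ 0}) ∧
      Set.range (stoneCechUnit : X → StoneCech X) ⊆ C}

/-- A topological space `Y` is realcompact if it admits a closed embedding into a
product `ℝ^ι` for some index set `ι`. -/
def IsRealcompact (Y : Type u) [TopologicalSpace Y] : Prop :=
  ∃ (ι : Type u) (f : Y → ι → ℝ), IsClosedEmbedding f

/-! ### Auxiliary lemmas -/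

namespace ConnModAux

open Filter

universe u

variable {X : Type u} [TopologicalSpace X]

lemma range_subset_upsilon : Set.range (stoneCechUnit : X → StoneCech X) ⊆ upsilonSet X :=
  fun _p hp _C hC => hC.2 hp

lemma isEmbedding_stoneCechUnit [T35Space X] :
    IsEmbedding (stoneCechUnit : X → StoneCech X) := by
  refine ⟨isInducing_iff_nhds.2 fun x => le_antisymm ?_ ?_, injective_stoneCechUnit_of_t35Space⟩
  · exact continuous_stoneCechUnit.continuousAt.le_comap
  · intro U hU
    rcases mem_nhds_iff.1 hU with ⟨V, hVU, hVo, hxV⟩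
    obtain ⟨f, hfc, hfx, hfK⟩ :=
      CompletelyRegularSpace.completely_regular x Vᶜ hVo.isClosed_compl (by simpa)
    set F := stoneCechExtend hfc with hF
    have hFu : ∀ y, F (stoneCechUnit y) = f y := fun y =>
      congrFun (stoneCechExtend_extends hfc) y
    refine Filter.mem_comap.2 ⟨F ⁻¹' {z : unitInterval | (z : ℝ) < 1}, ?_, ?_⟩
    · have : IsOpen (F ⁻¹' {z : unitInterval | (z : ℝ) < 1}) :=
        (isOpen_Iio.preimage continuous_subtype_val).preimage (continuous_stoneCechExtend hfc)
      refine this.mem_nhds ?_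
      simp only [mem_preimage, hFu, hfx]
      norm_num
    · intro y hy
      simp only [mem_preimage, hFu] at hy
      by_contra hyV
      have : f y = 1 := hfK (by simp [hVU, mem_compl_iff]; exact fun h => hyV (hVU h))
      rw [this] at hy
      simp at hy

lemma squash_cont : Continuous (fun y : ℝ => y / (1 + |y|)) := by
  refine Continuous.div continuous_id (by fun_prop) fun y => ?_
  positivity

lemma squash_abs_lt (y : ℝ) : |y / (1 + |y|)| < 1 := by
  have h : (0:ℝ) < 1 + |y| := by positivity
  rw [abs_div, abs_of_pos h, div_lt_one h]
  linarith [abs_nonneg y]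

lemma squash_inv (y : ℝ) : (y / (1 + |y|)) / (1 - |y / (1 + |y|)|) = y := by
  have h : (0:ℝ) < 1 + |y| := by positivity
  rw [abs_div, abs_of_pos h]
  have h2 : 1 - |y| / (1 + |y|) = 1 / (1 + |y|) := by field_simp; ring
  rw [h2]
  field_simp

/-- The key υ-extension input: every continuous real function on X has a bounded
transform extending to βX which stays strictly inside (-1,1) on υX. -/
lemma exists_bounded_rep {f : X → ℝ} (hf : Continuous f) :
    ∃ F : StoneCech X → ℝ, Continuous F ∧ (∀ p, |F p| ≤ 1) ∧
      (∀ p ∈ upsilonSet X, |F p| < 1) ∧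
      ∀ x, F (stoneCechUnit x) = f x / (1 + |f x|) := by
  set t : X → Icc (-1:ℝ) 1 := fun x =>
    ⟨f x / (1 + |f x|), abs_le.1 (squash_abs_lt (f x)).le⟩ with ht
  have htc : Continuous t := Continuous.subtype_mk (squash_cont.comp hf) _
  set F0 := stoneCechExtend htc with hF0
  refine ⟨fun p => (F0 p : ℝ), continuous_subtype_val.comp (continuous_stoneCechExtend htc),
    fun p => abs_le.2 ⟨(F0 p).2.1, (F0 p).2.2⟩, ?_, fun x => ?_⟩
  · intro p hp
    have hcoz : Set.range (stoneCechUnit : X → StoneCech X) ⊆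
        {q : StoneCech X | 1 - |(F0 q : ℝ)| ≠ 0} := by
      rintro _ ⟨x, rfl⟩
      have h3 : F0 (stoneCechUnit x) = t x := congrFun (stoneCechExtend_extends htc) x
      have h2 := squash_abs_lt (f x)
      simp only [mem_setOf_eq, h3, ht]
      intro hc
      rw [sub_eq_zero] at hc
      exact absurd hc.symm (ne_of_lt h2)
    have hcont : Continuous fun q : StoneCech X => 1 - |(F0 q : ℝ)| := by
      have := continuous_subtype_val.comp (continuous_stoneCechExtend htc)
      fun_prop
    have hpC : p ∈ {q : StoneCech X | 1 - |(F0 q : ℝ)| ≠ 0} :=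
      hp _ ⟨⟨_, hcont, rfl⟩, hcoz⟩
    have h1 : |(F0 p : ℝ)| ≤ 1 := abs_le.2 ⟨(F0 p).2.1, (F0 p).2.2⟩
    rcases lt_or_eq_of_le h1 with h | h
    · exact h
    · exact absurd (by rw [h]; ring) hpC
  · show ((F0 (stoneCechUnit x)) : ℝ) = _
    have h3 : F0 (stoneCechUnit x) = t x := congrFun (stoneCechExtend_extends htc) x
    rw [h3]

/-- The trace of `υX` over `A` inside `βX`. -/
def Zset (A : Set X) : Set (StoneCech X) :=
  closure (stoneCechUnit '' A) ∩ upsilonSet X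

lemma exists_ext [NormalSpace X] {A : Set X} (hA : IsClosed A)
    (v : ↥A → ℝ) (hv : Continuous v) :
    ∃ V : ↥(Zset A) → ℝ, Continuous V ∧
      ∀ (z : ↥(Zset A)) (a : ↥A), z.1 = stoneCechUnit a.1 → V z = v a := by
  obtain ⟨F, hF⟩ := ContinuousMap.exists_restrict_eq (Y := ℝ) hA ⟨v, hv⟩
  have hFa : ∀ a : ↥A, F a.1 = v a := fun a => DFunLike.congr_fun hF a
  obtain ⟨G, hGc, _, hGlt, hGu⟩ := exists_bounded_rep (f := ⇑F) F.continuous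
  have hden : ∀ z : ↥(Zset A), 1 - |G z.1| ≠ 0 := fun z =>
    ne_of_gt (by linarith [hGlt z.1 z.2.2])
  refine ⟨fun z => G z.1 / (1 - |G z.1|), ?_, ?_⟩
  · exact Continuous.div (hGc.comp continuous_subtype_val)
      (by have := hGc.comp (continuous_subtype_val (p := (· ∈ Zset A))) ; fun_prop) hden
  · rintro z a hza
    simp only [hza, hGu a.1, squash_inv, hFa a]

theorem closure_disjoint_of_realcompact [NormalSpace X] [T35Space X] {A : Set X}
    (hA : IsClosed A) (hrc : ∃ (ι : Type u) (e : ↥A → ι → ℝ), IsClosedEmbedding e) :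
    closure (stoneCechUnit '' A) ∩
      (upsilonSet X \ Set.range (stoneCechUnit : X → StoneCech X)) = ∅ := by
  by_contra hne
  obtain ⟨p, hp1, hp2, hp3⟩ := Set.nonempty_iff_ne_empty.2 hne
  obtain ⟨ι, e, he⟩ := hrc
  set Z := Zset A with hZ
  have hpZ : p ∈ Z := ⟨hp1, hp2⟩
  set pZ : ↥Z := ⟨p, hpZ⟩ with hpZdef
  set j : ↥A → ↥Z := fun a =>
    ⟨stoneCechUnit a.1, subset_closure ⟨a.1, a.2, rfl⟩, range_subset_upsilon ⟨a.1, rfl⟩⟩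
    with hj
  have hval : Subtype.val '' Set.range j = stoneCechUnit '' A := by
    ext q
    constructor
    · rintro ⟨_, ⟨a, rfl⟩, rfl⟩; exact ⟨a.1, a.2, rfl⟩
    · rintro ⟨x, hx, rfl⟩; exact ⟨j ⟨x, hx⟩, ⟨⟨x, hx⟩, rfl⟩, rfl⟩
  have hpcl : pZ ∈ closure (Set.range j) := by
    rw [IsInducing.subtypeVal.closure_eq_preimage_closure_image, hval]
    exact hp1
  choose V hVc hVe using fun i : ι =>
    exists_ext hA (fun a => e a i) ((continuous_apply i).comp he.continuous)
  set E : ↥Z → ι → ℝ := fun z i => V i z with hE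
  have hEc : Continuous E := continuous_pi fun i => hVc i
  have hEj : ∀ a : ↥A, E (j a) = e a := fun a => funext fun i => hVe i (j a) a rfl
  have hmem : ∀ (κ : Type u) (W : ↥Z → κ → ℝ) (w : ↥A → κ → ℝ), Continuous W →
      (∀ a, W (j a) = w a) → IsClosed (Set.range w) → W pZ ∈ Set.range w := by
    intro κ W w hWc hWj hwcl
    have h1 : W pZ ∈ closure (W '' Set.range j) :=
      (image_closure_subset_closure_image hWc) ⟨pZ, hpcl, rfl⟩
    have h2 : W '' Set.range j = Set.range w := by
      rw [← Set.range_comp]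
      exact congrArg _ (funext hWj)
    rw [h2, hwcl.closure_eq] at h1
    exact h1
  obtain ⟨a₁, ha₁⟩ := hmem ι E e hEc hEj he.isClosed_range
  have hpne : p ≠ stoneCechUnit a₁.1 := fun hc => hp3 (hc ▸ ⟨a₁.1, rfl⟩)
  obtain ⟨h, hh0, hh1, _⟩ :=
    exists_continuous_zero_one_of_isClosed (X := StoneCech X)
      (isClosed_singleton (x := p)) (isClosed_singleton (x := stoneCechUnit a₁.1))
      (Set.disjoint_singleton.2 hpne)
  set w' : ↥A → Option ι → ℝ := fun a o => o.elim (h (stoneCechUnit a.1)) (fun i => e a i)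
    with hw'
  set E' : ↥Z → Option ι → ℝ := fun z o => o.elim (h z.1) (fun i => V i z) with hE'
  have hE'c : Continuous E' := by
    refine continuous_pi fun o => ?_
    cases o with
    | none => exact h.continuous.comp continuous_subtype_val
    | some i => exact hVc i
  have hE'j : ∀ a : ↥A, E' (j a) = w' a := by
    intro a
    funext o
    cases o with
    | none => rfl
    | some i => exact hVe i (j a) a rfl
  set π : (Option ι → ℝ) → ι → ℝ := fun q i => q (some i) with hπ
  have hπc : Continuous π := continuous_pi fun i => continuous_apply (some i)
  set S : Set (Option ι → ℝ) := π ⁻¹' (Set.range e) with hS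
  have hScl : IsClosed S := he.isClosed_range.preimage hπc
  set φ := he.isEmbedding.toHomeomorph with hφ
  set θ : ↥S → ℝ := fun q => q.1 none - h (stoneCechUnit (φ.symm ⟨π q.1, q.2⟩).1) with hθ
  have hθc : Continuous θ := by
    refine Continuous.sub ((continuous_apply none).comp continuous_subtype_val) ?_
    exact h.continuous.comp (continuous_stoneCechUnit.comp (continuous_subtype_val.comp
      (φ.symm.continuous.comp (Continuous.subtype_mk (hπc.comp continuous_subtype_val) _))))
  have hφsymm : ∀ a : ↥A, ∀ (hm : e a ∈ Set.range e), φ.symm ⟨e a, hm⟩ = a := by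
    intro a hm
    apply φ.injective
    simp [hφ, IsEmbedding.toHomeomorph]
  have hπw' : ∀ a : ↥A, π (w' a) = e a := fun a => funext fun i => rfl
  have hrange : Set.range w' = Subtype.val '' (θ ⁻¹' {0}) := by
    ext q
    constructor
    · rintro ⟨a, rfl⟩
      have hmS : w' a ∈ S := by
        simp only [hS, Set.mem_preimage, hπw' a]
        exact ⟨a, rfl⟩
      refine ⟨⟨w' a, hmS⟩, ?_, rfl⟩
      simp only [Set.mem_preimage, Set.mem_singleton_iff, hθ]
      have : (⟨π (w' a), hmS⟩ : ↥(Set.range e)) = ⟨e a, ⟨a, rfl⟩⟩ := by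
        simp [hπw' a]
      rw [this, hφsymm a ⟨a, rfl⟩]
      simp [hw']
    · rintro ⟨⟨q, hqS⟩, hθq, rfl⟩
      simp only [Set.mem_preimage, Set.mem_singleton_iff, hθ] at hθq
      set a := φ.symm ⟨π q, hqS⟩ with ha
      refine ⟨a, ?_⟩
      have hea : e a = π q := by
        have := φ.apply_symm_apply ⟨π q, hqS⟩
        have h2 : (φ a).1 = π q := by rw [ha, this]
        rw [← h2]
        rfl
      funext o
      cases o with
      | none => simp only [hw']; simp only [sub_eq_zero] at hθq; exact hθq.symm
      | some i =>
        show e a i = q (some i)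
        rw [congrFun hea i]
  have hw'cl : IsClosed (Set.range w') := by
    rw [hrange]
    exact hScl.isClosedEmbedding_subtypeVal.isClosedMap _ (isClosed_singleton.preimage hθc)
  obtain ⟨a₂, ha₂⟩ := hmem (Option ι) E' w' hE'c hE'j hw'cl
  have hsome : e a₂ = e a₁ := by
    funext i
    have h1 : w' a₂ (some i) = E' pZ (some i) := congrFun ha₂ (some i)
    simp only [hw', Option.elim] at h1
    calc e a₂ i = E' pZ (some i) := h1
      _ = V i pZ := rfl
      _ = E pZ i := rfl
      _ = e a₁ i := (congrFun ha₁ i).symm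
  have ha21 : a₂ = a₁ := he.injective hsome
  have hnone : h (stoneCechUnit a₂.1) = h p := congrFun ha₂ none
  have h0 : h p = 0 := hh0 rfl
  have h1 : h (stoneCechUnit a₁.1) = 1 := hh1 rfl
  rw [ha21, h1, h0] at hnone
  exact one_ne_zero hnone

theorem realcompact_of_closure_disjoint [T35Space X] {A : Set X} (hA : IsClosed A)
    (hd : closure (stoneCechUnit '' A) ∩
      (upsilonSet X \ Set.range (stoneCechUnit : X → StoneCech X)) = ∅) :
    ∃ (ι : Type u) (e : ↥A → ι → ℝ), IsClosedEmbedding e := by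
  classical
  set 𝒞 : Type u := {f : StoneCech X → ℝ // Continuous f} with h𝒞
  set 𝒢 : Set 𝒞 :=
    {g | Set.range (stoneCechUnit : X → StoneCech X) ⊆ {p | g.1 p ≠ 0}} with h𝒢
  set Φ : StoneCech X → 𝒞 → ℝ := fun p f => f.1 p with hΦdef
  have hΦc : Continuous Φ := continuous_pi fun f => f.2
  have hΦinj : Function.Injective Φ := by
    intro p q hpq
    by_contra hne
    obtain ⟨f, hfc, hfne⟩ := separatesPoints_continuous_of_t35Space (X := StoneCech X) hne
    exact hfne (congrFun hpq ⟨f, hfc⟩)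
  have hΦ : IsClosedEmbedding Φ := hΦc.isClosedEmbedding hΦinj
  have hgne : ∀ (g : ↥𝒢) (x : X), g.1.1 (stoneCechUnit x) ≠ 0 := fun g x => g.2 ⟨x, rfl⟩
  set e : ↥A → (𝒞 ⊕ ↥𝒢) → ℝ := fun a o =>
    Sum.elim (fun f : 𝒞 => f.1 (stoneCechUnit a.1))
      (fun g : ↥𝒢 => (g.1.1 (stoneCechUnit a.1))⁻¹) o with he
  have huA : Continuous fun a : ↥A => stoneCechUnit a.1 :=
    continuous_stoneCechUnit.comp continuous_subtype_val
  have hec : Continuous e := by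
    refine continuous_pi fun o => ?_
    cases o with
    | inl f => exact f.2.comp huA
    | inr g => exact Continuous.inv₀ (g.1.2.comp huA) fun a => hgne g a.1
  have hcomp : (fun q : (𝒞 ⊕ ↥𝒢) → ℝ => fun f : 𝒞 => q (Sum.inl f)) ∘ e
      = Φ ∘ (fun a : ↥A => stoneCechUnit a.1) := rfl
  have hπ1c : Continuous fun q : (𝒞 ⊕ ↥𝒢) → ℝ => fun f : 𝒞 => q (Sum.inl f) :=
    continuous_pi fun f => continuous_apply (Sum.inl f)
  have hembA : IsEmbedding fun a : ↥A => stoneCechUnit a.1 :=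
    isEmbedding_stoneCechUnit.comp IsEmbedding.subtypeVal
  have hind : IsInducing e := by
    refine IsInducing.of_comp hec hπ1c ?_
    rw [hcomp]
    exact (hΦ.isEmbedding.comp hembA).isInducing
  have hinj : Function.Injective e := by
    intro a a' haa'
    have : Φ (stoneCechUnit a.1) = Φ (stoneCechUnit a'.1) := by
      funext f
      exact congrFun haa' (Sum.inl f)
    exact (hΦ.injective.comp hembA.injective).eq_iff.1 this
  set T1 : Set ((𝒞 ⊕ ↥𝒢) → ℝ) :=
    (fun q => fun f : 𝒞 => q (Sum.inl f)) ⁻¹' (Φ '' closure (stoneCechUnit '' A)) with hT1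
  set T2 : Set ((𝒞 ⊕ ↥𝒢) → ℝ) :=
    ⋂ g : ↥𝒢, {q | q (Sum.inr g) * q (Sum.inl g.1) = 1} with hT2
  have hT1cl : IsClosed T1 := (hΦ.isClosedMap _ isClosed_closure).preimage hπ1c
  have hT2cl : IsClosed T2 := by
    refine isClosed_iInter fun g => ?_
    exact isClosed_eq (Continuous.mul (continuous_apply _) (continuous_apply _))
      continuous_const
  have hrange : Set.range e = T1 ∩ T2 := by
    ext q
    constructor
    · rintro ⟨a, rfl⟩
      constructor
      · exact ⟨stoneCechUnit a.1, subset_closure ⟨a.1, a.2, rfl⟩, rfl⟩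
      · refine Set.mem_iInter.2 fun g => ?_
        exact inv_mul_cancel₀ (hgne g a.1)
    · rintro ⟨⟨p, hpcl, hΦp⟩, hq2⟩
      have hgp : ∀ g : ↥𝒢, g.1.1 p ≠ 0 := by
        intro g hg0
        have h1 : q (Sum.inr g) * q (Sum.inl g.1) = 1 := Set.mem_iInter.1 hq2 g
        have h2 : q (Sum.inl g.1) = g.1.1 p := (congrFun hΦp g.1).symm
        rw [h2, hg0, mul_zero] at h1
        exact zero_ne_one h1
      have hpυ : p ∈ upsilonSet X := by
        intro C hC
        obtain ⟨⟨g, hgc, rfl⟩, hrg⟩ := hC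
        exact hgp ⟨⟨g, hgc⟩, hrg⟩
      have hpr : p ∈ Set.range (stoneCechUnit : X → StoneCech X) := by
        by_contra hpr
        exact absurd (hd ▸ (Set.mem_inter hpcl ⟨hpυ, hpr⟩ : p ∈ closure (stoneCechUnit '' A) ∩
          (upsilonSet X \ Set.range stoneCechUnit))) (Set.notMem_empty p)
      obtain ⟨x, rfl⟩ := hpr
      have hxA : x ∈ A := by
        have h1 : closure A = stoneCechUnit ⁻¹' closure (stoneCechUnit '' A) :=
          isEmbedding_stoneCechUnit.closure_eq_preimage_closure_image A
        have : x ∈ closure A := h1 ▸ hpcl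
        rwa [hA.closure_eq] at this
      refine ⟨⟨x, hxA⟩, ?_⟩
      funext o
      cases o with
      | inl f => exact congrFun hΦp f
      | inr g =>
        have h1 : q (Sum.inr g) * q (Sum.inl g.1) = 1 := Set.mem_iInter.1 hq2 g
        have h2 : q (Sum.inl g.1) = g.1.1 (stoneCechUnit x) := (congrFun hΦp g.1).symm
        rw [h2] at h1
        show (g.1.1 (stoneCechUnit x))⁻¹ = q (Sum.inr g)
        exact (eq_inv_of_mul_eq_one_left h1).symm
  exact ⟨𝒞 ⊕ ↥𝒢, e, ⟨⟨hind, hinj⟩, hrange ▸ hT1cl.inter hT2cl⟩⟩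

lemma closure_image_closure (R : Set X) :
    closure (stoneCechUnit '' closure R) = closure ((stoneCechUnit : X → StoneCech X) '' R) := by
  apply subset_antisymm
  · exact closure_minimal
      (image_closure_subset_closure_image continuous_stoneCechUnit) isClosed_closure
  · exact closure_mono (Set.image_mono subset_closure)

/-- The characterization of the ideal 𝓡_X. -/
theorem mem_genIdeal_iff [NormalSpace X] [T35Space X] (S : Set X) :
    S ∈ GenIdeal {R : Set X | IsRealcompact ↥(closure R)} ↔
      closure (stoneCechUnit '' S) ∩
        (upsilonSet X \ Set.range (stoneCechUnit : X → StoneCech X)) = ∅ := by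
  constructor
  · rintro ⟨𝓑, h𝓑A, h𝓑fin, hSsub⟩
    set C : Set (StoneCech X) := ⋃ R ∈ 𝓑, closure (stoneCechUnit '' R) with hC
    have hCcl : IsClosed C := h𝓑fin.isClosed_biUnion fun R _ => isClosed_closure
    have hSC : closure (stoneCechUnit '' S) ⊆ C := by
      apply closure_minimal _ hCcl
      rintro _ ⟨x, hx, rfl⟩
      obtain ⟨R, hR𝓑, hxR⟩ := hSsub hx
      exact Set.mem_biUnion hR𝓑 (subset_closure ⟨x, hxR, rfl⟩)
    rw [Set.eq_empty_iff_forall_notMem]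
    rintro p ⟨hp1, hp2⟩
    obtain ⟨R, hR𝓑, hpR⟩ := Set.mem_iUnion₂.1 (hSC hp1)
    have hrc : IsRealcompact ↥(closure R) := h𝓑A hR𝓑
    have := closure_disjoint_of_realcompact (isClosed_closure (s := R)) hrc
    rw [closure_image_closure] at this
    exact Set.eq_empty_iff_forall_notMem.1 this p ⟨hpR, hp2⟩
  · intro hd
    have hd' : closure (stoneCechUnit '' closure S) ∩
        (upsilonSet X \ Set.range (stoneCechUnit : X → StoneCech X)) = ∅ := by
      rw [closure_image_closure]; exact hd
    have hrc := realcompact_of_closure_disjoint (isClosed_closure (s := S)) hd'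
    refine ⟨{closure S}, ?_, Set.finite_singleton _, ?_⟩
    · intro R hR
      rw [Set.mem_singleton_iff] at hR
      subst hR
      show IsRealcompact ↥(closure (closure S))
      rw [closure_closure]
      exact hrc
    · rw [Set.sUnion_singleton]
      exact subset_closure


noncomputable def clamp (t : ℝ) : ℝ := min 1 (max 0 (3*t - 1))

lemma clamp_cont : Continuous clamp := by unfold clamp; fun_prop

lemma clamp_mem (t : ℝ) : clamp t ∈ Icc (0:ℝ) 1 :=
  ⟨le_min (by norm_num) (le_max_left _ _), min_le_left _ _⟩

lemma clamp_eq_zero {t : ℝ} (h : t ≤ 1/3) : clamp t = 0 := by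
  unfold clamp
  rw [max_eq_left (by linarith)]
  norm_num

lemma clamp_eq_one {t : ℝ} (h : 2/3 ≤ t) : clamp t = 1 := by
  unfold clamp
  rw [max_eq_right (by linarith)]
  exact min_eq_left (by linarith)

lemma lt_of_clamp_ne_zero {t : ℝ} (h : clamp t ≠ 0) : 1/3 < t := by
  by_contra hc
  push_neg at hc
  exact h (clamp_eq_zero hc)

lemma gt_of_clamp_ne_one {t : ℝ} (h : clamp t ≠ 1) : t < 2/3 := by
  by_contra hc
  push_neg at hc
  exact h (clamp_eq_one hc)

end ConnModAux


open ConnModAux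

/-- A normal Tychonoff space `X` is connected modulo realcompactness (modulo the ideal
`𝓡_X` generated by the subsets of `X` with realcompact closure) iff `cl_{βX}(υX \ X)`
is preconnected. -/
theorem connectedMod_realcompact_iff {X : Type u} [TopologicalSpace X]
    [NormalSpace X] [T35Space X] :
    ConnectedMod X (GenIdeal {R : Set X | IsRealcompact ↥(closure R)}) ↔
      IsPreconnected
        (closure (upsilonSet X \ Set.range (stoneCechUnit : X → StoneCech X))) := by
  classical
  constructor
  · -- ConnectedMod → IsPreconnected
    intro hcm
    by_contra hnp
    apply hcm
    unfold IsPreconnected at hnp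
    push_neg at hnp
    obtain ⟨U, V, hU, hV, hcov, hne1, hne2, hdisj⟩ := hnp
    set D := upsilonSet X \ Set.range (stoneCechUnit : X → StoneCech X) with hD
    set Y := closure D with hYdef
    set A := Y \ V with hAdef
    set B := Y \ U with hBdef
    have hAcl : IsClosed A := isClosed_closure.sdiff hV
    have hBcl : IsClosed B := isClosed_closure.sdiff hU
    have hABd : Disjoint A B := by
      rw [Set.disjoint_left]
      rintro p ⟨hpY, hpV⟩ ⟨_, hpU⟩
      rcases hcov hpY with h | h
      exacts [hpU h, hpV h]
    have hAne : A.Nonempty := by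
      obtain ⟨p, hpY, hpU⟩ := hne1
      refine ⟨p, hpY, fun hpV => ?_⟩
      exact absurd (hdisj ▸ (Set.mem_inter hpY (Set.mem_inter hpU hpV) : p ∈ Y ∩ (U ∩ V))) (Set.notMem_empty p)
    have hBne : B.Nonempty := by
      obtain ⟨p, hpY, hpV⟩ := hne2
      refine ⟨p, hpY, fun hpU => ?_⟩
      exact absurd (hdisj ▸ (Set.mem_inter hpY (Set.mem_inter hpU hpV) : p ∈ Y ∩ (U ∩ V))) (Set.notMem_empty p)
    have hcoverAB : Y ⊆ A ∪ B := by
      intro p hpY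
      rcases hcov hpY with h | h
      · exact Or.inl ⟨hpY, fun hv => (Set.notMem_empty p) (hdisj ▸ ⟨hpY, h, hv⟩)⟩
      · exact Or.inr ⟨hpY, fun hu => (Set.notMem_empty p) (hdisj ▸ ⟨hpY, hu, h⟩)⟩
    obtain ⟨g, hg0, hg1, hg01⟩ := exists_continuous_zero_one_of_isClosed hAcl hBcl hABd
    set f : X → ℝ := fun x => clamp (g (stoneCechUnit x)) with hfdef
    have hfc : Continuous f :=
      clamp_cont.comp (g.continuous.comp continuous_stoneCechUnit)
    -- a generic argument for f⁻¹{0} and f⁻¹{1}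
    have hkey : ∀ (c : ℝ) (s : Set X) (q : StoneCech X), q ∈ closure D →
        (∃ O : Set (StoneCech X), IsOpen O ∧ q ∈ O ∧
          ∀ x : X, stoneCechUnit x ∈ O → x ∈ s) →
        ¬ (closure (stoneCechUnit '' s) ∩ D = ∅) := by
      intro c s q hqY ⟨O, hO, hqO, hOs⟩ hemp
      obtain ⟨p, hpO, hpD⟩ := mem_closure_iff.1 hqY O hO hqO
      have hpcl : p ∈ closure (stoneCechUnit '' s) := by
        rw [mem_closure_iff]
        intro O' hO' hpO'
        obtain ⟨r, ⟨hr1, hr2⟩, x, rfl⟩ :=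
          denseRange_stoneCechUnit.inter_open_nonempty (O' ∩ O) (hO'.inter hO)
            ⟨p, hpO', hpO⟩
        exact ⟨stoneCechUnit x, hr1, ⟨x, hOs x hr2, rfl⟩⟩
      exact absurd (hemp ▸ (Set.mem_inter hpcl hpD : p ∈ closure (stoneCechUnit '' s) ∩ D))
        (Set.notMem_empty p)
    refine ⟨f, hfc, fun x => clamp_mem _, ?_, ?_, ?_⟩
    · -- f⁻¹{0} ∉ H
      intro hin
      obtain ⟨a, haA⟩ := hAne
      have hga : g a = 0 := hg0 haA
      refine hkey 0 (f ⁻¹' {0}) a haA.1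
        ⟨g ⁻¹' (Iio (1/3)), isOpen_Iio.preimage g.continuous, by simp [hga], ?_⟩
        ((mem_genIdeal_iff _).1 hin)
      intro x hx
      have : g (stoneCechUnit x) < 1/3 := hx
      simp only [Set.mem_preimage, Set.mem_singleton_iff, hfdef]
      exact clamp_eq_zero this.le
    · -- f⁻¹{1} ∉ H
      intro hin
      obtain ⟨b, hbB⟩ := hBne
      have hgb : g b = 1 := hg1 hbB
      refine hkey 1 (f ⁻¹' {1}) b hbB.1
        ⟨g ⁻¹' (Ioi (2/3)), isOpen_Ioi.preimage g.continuous, by simp [hgb]; norm_num, ?_⟩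
        ((mem_genIdeal_iff _).1 hin)
      intro x hx
      have : (2:ℝ)/3 < g (stoneCechUnit x) := hx
      simp only [Set.mem_preimage, Set.mem_singleton_iff, hfdef]
      exact clamp_eq_one this.le
    · -- the middle part is in the ideal
      refine (mem_genIdeal_iff _).2 ?_
      have hsub : closure (stoneCechUnit '' (f ⁻¹' {0} ∪ f ⁻¹' {1})ᶜ) ⊆
          g ⁻¹' (Icc (1/3) (2/3)) := by
        refine closure_minimal ?_ (isClosed_Icc.preimage g.continuous)
        rintro _ ⟨x, hx, rfl⟩
        simp only [Set.mem_compl_iff, Set.mem_union, Set.mem_preimage,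
          Set.mem_singleton_iff, not_or] at hx
        exact ⟨(lt_of_clamp_ne_zero hx.1).le, (gt_of_clamp_ne_one hx.2).le⟩
      rw [Set.eq_empty_iff_forall_notMem]
      rintro p ⟨hp1, hpD⟩
      have hpK := hsub hp1
      simp only [Set.mem_preimage, Set.mem_Icc] at hpK
      rcases hcoverAB (subset_closure hpD) with h | h
      · have h0 : g p = 0 := hg0 h
        rw [h0] at hpK
        norm_num at hpK
      · have h0 : g p = 1 := hg1 h
        rw [h0] at hpK
        norm_num at hpK
  · -- IsPreconnected → ConnectedMod
    rintro hpre ⟨f, hfc, hficc, h0n, h1n, hWin⟩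
    have hWd := (mem_genIdeal_iff _).1 hWin
    set D := upsilonSet X \ Set.range (stoneCechUnit : X → StoneCech X) with hD
    have hfc' : Continuous fun x : X => (⟨f x, hficc x⟩ : ↥(Icc (0:ℝ) 1)) :=
      hfc.subtype_mk _
    set F := stoneCechExtend hfc' with hF
    have hFu : ∀ x : X, F (stoneCechUnit x) = ⟨f x, hficc x⟩ := fun x =>
      congrFun (stoneCechExtend_extends hfc') x
    set C0 := closure (stoneCechUnit '' (f ⁻¹' {0})) with hC0def
    set C1 := closure (stoneCechUnit '' (f ⁻¹' {1})) with hC1def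
    have hC0 : C0 ⊆ F ⁻¹' {(⟨0, by norm_num⟩ : ↥(Icc (0:ℝ) 1))} := by
      refine closure_minimal ?_ (isClosed_singleton.preimage (continuous_stoneCechExtend hfc'))
      rintro _ ⟨x, hx, rfl⟩
      simp only [Set.mem_preimage, Set.mem_singleton_iff, hFu]
      exact Subtype.ext hx
    have hC1 : C1 ⊆ F ⁻¹' {(⟨1, by norm_num⟩ : ↥(Icc (0:ℝ) 1))} := by
      refine closure_minimal ?_ (isClosed_singleton.preimage (continuous_stoneCechExtend hfc'))
      rintro _ ⟨x, hx, rfl⟩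
      simp only [Set.mem_preimage, Set.mem_singleton_iff, hFu]
      exact Subtype.ext hx
    have hd01 : C0 ∩ C1 = ∅ := by
      rw [Set.eq_empty_iff_forall_notMem]
      rintro p ⟨hp0, hp1⟩
      have h0 := hC0 hp0
      have h1 := hC1 hp1
      simp only [Set.mem_preimage, Set.mem_singleton_iff] at h0 h1
      rw [h0] at h1
      have : (0:ℝ) = 1 := congrArg Subtype.val h1
      norm_num at this
    have hDsub : D ⊆ C0 ∪ C1 := by
      intro p hpD
      have huniv : (f ⁻¹' {0} ∪ f ⁻¹' {1}) ∪ (f ⁻¹' {0} ∪ f ⁻¹' {1})ᶜ = Set.univ :=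
        Set.union_compl_self _
      have hpcl : p ∈ closure (Set.range (stoneCechUnit : X → StoneCech X)) :=
        denseRange_stoneCechUnit p
      rw [← Set.image_univ, ← huniv, Set.image_union, Set.image_union, closure_union,
        closure_union] at hpcl
      rcases hpcl with (h | h) | h
      · exact Or.inl h
      · exact Or.inr h
      · exact absurd (hWd ▸ (Set.mem_inter h hpD : p ∈ closure (stoneCechUnit ''
          (f ⁻¹' {0} ∪ f ⁻¹' {1})ᶜ) ∩ D)) (Set.notMem_empty p)
    have hcover : closure D ⊆ C0 ∪ C1 :=
      closure_minimal hDsub (isClosed_closure.union isClosed_closure)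
    have hcover' : closure D ⊆ C1ᶜ ∪ C0ᶜ := by
      intro y hy
      rcases hcover hy with h | h
      · exact Or.inl fun hc => (Set.notMem_empty y) (hd01 ▸ ⟨h, hc⟩)
      · exact Or.inr fun hc => (Set.notMem_empty y) (hd01 ▸ ⟨hc, h⟩)
    have hne1 : (closure D ∩ C1ᶜ).Nonempty := by
      rw [Set.nonempty_iff_ne_empty]
      intro hemp
      apply h0n
      refine (mem_genIdeal_iff _).2 ?_
      rw [Set.eq_empty_iff_forall_notMem]
      rintro p ⟨hp0, hpD⟩
      have hpC1 : p ∈ C1 := by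
        by_contra hc
        exact Set.eq_empty_iff_forall_notMem.1 hemp p ⟨subset_closure hpD, hc⟩
      exact (Set.notMem_empty p) (hd01 ▸ (⟨hp0, hpC1⟩ : p ∈ C0 ∩ C1))
    have hne0 : (closure D ∩ C0ᶜ).Nonempty := by
      rw [Set.nonempty_iff_ne_empty]
      intro hemp
      apply h1n
      refine (mem_genIdeal_iff _).2 ?_
      rw [Set.eq_empty_iff_forall_notMem]
      rintro p ⟨hp1, hpD⟩
      have hpC0 : p ∈ C0 := by
        by_contra hc
        exact Set.eq_empty_iff_forall_notMem.1 hemp p ⟨subset_closure hpD, hc⟩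
      exact (Set.notMem_empty p) (hd01 ▸ (⟨hpC0, hp1⟩ : p ∈ C0 ∩ C1))
    obtain ⟨y, hyY, hyn1, hyn0⟩ := hpre C1ᶜ C0ᶜ isClosed_closure.isOpen_compl
      isClosed_closure.isOpen_compl hcover' hne1 hne0
    rcases hcover hyY with h | h
    exacts [hyn0 h, hyn1 h]
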